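/- The fermionic Stirling numbers of the second kind satisfy the following second-order recurrences: for every odd natural number j > 3 and every n ≥ 1, S_f(n+1, j) = S_f(n, j) + S_f(n, j−1); and for all natural numbers n ≥ 1 and j ≥ 2, S_f(n+1, j) = S_f(n, j) − S_f(n−1, j−2). -/

import Mathlib

open Finset

/-- `ε_n = (1 - (-1)^n)/2`, so `ε_n = 0` for even `n` and `ε_n = 1` for odd `n`. -/
def eps (n : ℕ) : ℤ := (1 - (-1 : ℤ) ^ n) / 2

/-- The fermionic Stirling numbers of the second kind, defined by the recurrence
`S_f(n+1,k) = (-1)^{k-1} S_f(n,k-1) + ε_k S_f(n,k)`, with `S_f(0,0) = 1`,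
`S_f(n,0) = 0` for `n ≥ 1`, and `S_f(n,k) = 0` for `k > n`. -/
def Sf : ℕ → ℕ → ℤ
  | 0, 0 => 1
  | 0, _ + 1 => 0
  | _ + 1, 0 => 0
  | n + 1, k + 1 => (-1 : ℤ) ^ k * Sf n k + eps (k + 1) * Sf n (k + 1)

theorem Sf_second_order_recurrences :
    (∀ j : ℕ, Odd j → 3 < j → ∀ n : ℕ, 1 ≤ n → Sf (n + 1) j = Sf n j + Sf n (j - 1)) ∧
    (∀ n : ℕ, 1 ≤ n → ∀ j : ℕ, 2 ≤ j → Sf (n + 1) j = Sf n j - Sf (n - 1) (j - 2)) := by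
  have heps_even : ∀ k : ℕ, Even k → eps k = 0 := by
    intro k hk; simp [eps, hk.neg_one_pow]
  have heps_odd : ∀ k : ℕ, Odd k → eps k = 1 := by
    intro k hk; simp [eps, hk.neg_one_pow]
  have hrec : ∀ n k : ℕ,
      Sf (n + 1) (k + 1) = (-1 : ℤ) ^ k * Sf n k + eps (k + 1) * Sf n (k + 1) := by
    intro n k; rfl
  constructor
  · intro j hj _ n _
    obtain ⟨k, hk⟩ : ∃ k, j = k + 1 := ⟨j - 1, by omega⟩
    subst hk
    have hke : Even k := by
      rcases Nat.even_or_odd k with h | h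
      · exact h
      · exact absurd (by simpa using h.add_one) (by simpa using hj)
    rw [hrec, heps_odd _ hj, hke.neg_one_pow]
    simp
    ring
  · intro n hn j hj
    obtain ⟨m, rfl⟩ : ∃ m, n = m + 1 := ⟨n - 1, by omega⟩
    obtain ⟨i, rfl⟩ : ∃ i, j = i + 2 := ⟨j - 2, by omega⟩
    simp only [Nat.add_sub_cancel]
    rcases Nat.even_or_odd i with hi | hi
    · have h1 : Odd (i + 1) := by simpa using hi.add_one
      have h2 : Even (i + 2) := by exact hi.add_one.add_one
      rw [show m + 1 + 1 = (m + 1) + 1 from rfl, hrec (m + 1) (i + 1),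
        hrec m (i + 1), hrec m i, heps_even _ h2, heps_odd _ h1,
        h1.neg_one_pow, hi.neg_one_pow]
      ring
    · have h1 : Even (i + 1) := by simpa using hi.add_one
      have h2 : Odd (i + 2) := by exact hi.add_one.add_one
      rw [show m + 1 + 1 = (m + 1) + 1 from rfl, hrec (m + 1) (i + 1),
        hrec m i, heps_odd _ h2, heps_even _ h1,
        h1.neg_one_pow, hi.neg_one_pow]
      ring
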